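/- For any λ ∈ ℂ and any finite subset A of ℂ, there exists a finite subset B of ℚ[λ] with |B| = |A| and |B + λ·B| ≤ |A + λ·A|. -/
import Mathlib
set_option synthInstance.maxHeartbeats 1000000
set_option maxHeartbeats 1000000

open scoped Pointwise

private lemma exists_dual_ne_zero {K V : Type*} [Field K] [Infinite K] [AddCommGroup V]
    [Module K V] (S : Finset V) (hS : ∀ v ∈ S, v ≠ 0) :
    ∃ φ : Module.Dual K V, ∀ v ∈ S, φ v ≠ 0 := by
  classical
  induction S using Finset.induction with
  | empty => exact ⟨0, by simp⟩
  | @insert v S hv ih =>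
    obtain ⟨φ, hφ⟩ := ih fun w hw => hS w (Finset.mem_insert_of_mem hw)
    have hv0 : v ≠ 0 := hS v (Finset.mem_insert_self _ _)
    obtain ⟨ψ, hψ⟩ : ∃ ψ : Module.Dual K V, ψ v ≠ 0 := by
      by_contra h
      push_neg at h
      exact hv0 ((Module.forall_dual_apply_eq_zero_iff K v).mp h)
    obtain ⟨c, hc⟩ := Infinite.exists_notMem_finset
      ((insert v S).image fun s => -φ s / ψ s)
    refine ⟨φ + c • ψ, fun w hw h0 => ?_⟩
    simp only [LinearMap.add_apply, LinearMap.smul_apply, smul_eq_mul] at h0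
    by_cases hws : ψ w = 0
    · rcases Finset.mem_insert.mp hw with rfl | hwS
      · exact hψ hws
      · rw [hws, mul_zero, add_zero] at h0
        exact hφ w hwS h0
    · have hcw : c = -φ w / ψ w := by
        rw [eq_div_iff hws]
        linear_combination h0
      exact hc (Finset.mem_image.mpr ⟨w, hw, hcw.symm⟩)

private lemma exists_denom (lam b : ℂ)
    (hb : b ∈ IntermediateField.adjoin ℚ ({lam} : Set ℂ)) :
    ∃ d : ℂ, d ≠ 0 ∧ d ∈ Algebra.adjoin ℚ {lam} ∧ d * b ∈ Algebra.adjoin ℚ {lam} := by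
  obtain ⟨r, s, hrs⟩ := (IntermediateField.mem_adjoin_simple_iff ℚ b).mp hb
  by_cases hs : Polynomial.aeval lam s = 0
  · have hb0 : b = 0 := by simp [hrs, hs]
    exact ⟨1, one_ne_zero, Subalgebra.one_mem _, by simp [hb0, Subalgebra.zero_mem]⟩
  · refine ⟨Polynomial.aeval lam s, hs, ?_, ?_⟩
    · rw [Algebra.adjoin_singleton_eq_range_aeval]; exact ⟨s, rfl⟩
    · have : Polynomial.aeval lam s * b = Polynomial.aeval lam r := by
        rw [hrs, mul_comm, div_mul_cancel₀ _ hs]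
      rw [this, Algebra.adjoin_singleton_eq_range_aeval]
      exact ⟨r, rfl⟩

theorem krachun_petrov_reduction (lam : ℂ) (A : Finset ℂ) :
    ∃ B : Finset ℂ, (B : Set ℂ) ⊆ (Algebra.adjoin ℚ {lam} : Subalgebra ℚ ℂ) ∧
      B.card = A.card ∧ (B + lam • B).card ≤ (A + lam • A).card := by
  classical
  set K : IntermediateField ℚ ℂ := IntermediateField.adjoin ℚ {lam} with hK
  have hlamK : lam ∈ K := IntermediateField.mem_adjoin_simple_self ℚ lam
  set l : K := ⟨lam, hlamK⟩ with hl
  -- differences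
  set S : Finset ℂ := ((A ×ˢ A).filter fun p => p.1 ≠ p.2).image fun p => p.1 - p.2 with hSdef
  have hS : ∀ v ∈ S, v ≠ 0 := by
    intro v hv
    simp only [hSdef, Finset.mem_image, Finset.mem_filter] at hv
    obtain ⟨p, ⟨_, hne⟩, rfl⟩ := hv
    exact sub_ne_zero.mpr hne
  obtain ⟨φ, hφ⟩ := exists_dual_ne_zero (K := K) S hS
  have hinj : ∀ a ∈ A, ∀ a' ∈ A, φ a = φ a' → a = a' := by
    intro a ha a' ha' hEq
    by_contra hne
    have hmem : a - a' ∈ S := by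
      simp only [hSdef, Finset.mem_image, Finset.mem_filter]
      exact ⟨(a, a'), ⟨Finset.mem_product.mpr ⟨ha, ha'⟩, hne⟩, rfl⟩
    exact hφ _ hmem (by rw [map_sub, hEq, sub_self])
  set g : ℂ → ℂ := fun x => (φ x : ℂ) with hg
  have hlc : (l : ℂ) = lam := rfl
  have hkey : ∀ x y : ℂ, g x + lam * g y = g (x + lam * y) := by
    intro x y
    have h1 : φ (x + lam * y) = φ x + l * φ y := by
      rw [show x + lam * y = x + l • y from rfl, map_add, map_smul, smul_eq_mul]
    simp only [hg, h1]
    push_cast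
    rfl
  set B₀ : Finset ℂ := A.image g with hB₀
  have hB₀K : ∀ b ∈ B₀, b ∈ K := by
    intro b hb
    obtain ⟨a, _, rfl⟩ := Finset.mem_image.mp hb
    exact (φ a).2
  have hcard₀ : B₀.card = A.card := by
    apply Finset.card_image_of_injOn
    intro a ha a' ha' hEq
    exact hinj a ha a' ha' (Subtype.coe_injective hEq)
  have hsub₀ : (B₀ + lam • B₀) ⊆ (A + lam • A).image g := by
    intro z hz
    rw [Finset.mem_add] at hz
    obtain ⟨b, hb, c, hc, rfl⟩ := hz
    obtain ⟨b', hb', rfl⟩ := Finset.mem_smul_finset.mp hc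
    obtain ⟨a, ha, rfl⟩ := Finset.mem_image.mp hb
    obtain ⟨a', ha', rfl⟩ := Finset.mem_image.mp hb'
    have hmem : a + lam * a' ∈ A + lam • A :=
      Finset.add_mem_add ha (Finset.smul_mem_smul_finset ha')
    rw [smul_eq_mul, hkey]
    exact Finset.mem_image.mpr ⟨_, hmem, rfl⟩
  have hcardle₀ : (B₀ + lam • B₀).card ≤ (A + lam • A).card :=
    (Finset.card_le_card hsub₀).trans Finset.card_image_le
  -- clear denominators
  have hdenom : ∀ b ∈ B₀, ∃ d : ℂ, d ≠ 0 ∧ d ∈ Algebra.adjoin ℚ {lam} ∧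
      d * b ∈ Algebra.adjoin ℚ {lam} := fun b hb => exists_denom lam b (hB₀K b hb)
  choose! D hD1 hD2 hD3 using hdenom
  set d : ℂ := ∏ b ∈ B₀, D b with hd
  have hd0 : d ≠ 0 := Finset.prod_ne_zero_iff.mpr hD1
  have hdadj : d ∈ Algebra.adjoin ℚ {lam} := Subalgebra.prod_mem _ hD2
  have hdb : ∀ b ∈ B₀, d * b ∈ Algebra.adjoin ℚ {lam} := by
    intro b hb
    have := Finset.mul_prod_erase B₀ D hb
    have hrw : d * b = (∏ x ∈ B₀.erase b, D x) * (D b * b) := by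
      rw [hd, ← this]; ring
    rw [hrw]
    exact mul_mem (Subalgebra.prod_mem _ fun x hx => hD2 x (Finset.mem_of_mem_erase hx))
      (hD3 b hb)
  refine ⟨B₀.image fun x => d * x, ?_, ?_, ?_⟩
  · intro x hx
    simp only [Finset.coe_image, Set.mem_image, Finset.mem_coe] at hx
    obtain ⟨b, hb, rfl⟩ := hx
    exact hdb b hb
  · rw [Finset.card_image_of_injective _ (mul_right_injective₀ hd0), hcard₀]
  · have hsub : ((B₀.image fun x => d * x) + lam • (B₀.image fun x => d * x)) ⊆
        (B₀ + lam • B₀).image fun x => d * x := by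
      intro z hz
      rw [Finset.mem_add] at hz
      obtain ⟨b, hb, c, hc, rfl⟩ := hz
      obtain ⟨b', hb', rfl⟩ := Finset.mem_smul_finset.mp hc
      obtain ⟨x, hx, rfl⟩ := Finset.mem_image.mp hb
      obtain ⟨x', hx', rfl⟩ := Finset.mem_image.mp hb'
      refine Finset.mem_image.mpr ⟨x + lam * x', ?_, by rw [smul_eq_mul]; ring⟩
      exact Finset.add_mem_add hx (by
        rw [Finset.mem_smul_finset]; exact ⟨x', hx', by rw [smul_eq_mul]⟩)
    exact le_trans (le_trans (Finset.card_le_card hsub) Finset.card_image_le) hcardle₀
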